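/- Let g be a finite-dimensional real Lie algebra and n ⊆ g a nilpotent Lie ideal with dim(g/n) = 1. Let z := {X ∈ n | ∀ Y ∈ n, [X,Y] = 0} be the centre of n. Suppose there exists a linear functional ξ₀ ∈ g* with g(ξ₀) := {X ∈ g | ∀ Y ∈ g, ξ₀([X,Y]) = 0} = {0} (i.e., g is exact symplectic). Then [g,z] ≠ {0}, dim z = 1, and {X ∈ n | ∀ Y ∈ n, ξ₀([X,Y]) = 0} = z. -/

import Mathlib

open Module

/-- The centre `{X ∈ n | ∀ Y ∈ n, [X,Y] = 0}` of a Lie ideal `n`, as a submodule of the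
ambient Lie algebra `g`. -/
def centreOfIdeal (g : Type*) [LieRing g] [LieAlgebra ℝ g] (n : LieIdeal ℝ g) :
    Submodule ℝ g where
  carrier := {X | X ∈ n ∧ ∀ Y ∈ n, ⁅X, Y⁆ = 0}
  add_mem' := by
    rintro a b ⟨ha, ha'⟩ ⟨hb, hb'⟩
    exact ⟨add_mem ha hb, fun Y hY => by rw [add_lie, ha' Y hY, hb' Y hY, add_zero]⟩
  zero_mem' := ⟨zero_mem n, fun Y _ => zero_lie Y⟩
  smul_mem' := by
    rintro c x ⟨hx, hx'⟩
    exact ⟨SMulMemClass.smul_mem c hx, fun Y hY => by rw [smul_lie, hx' Y hY, smul_zero]⟩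

/-- The isotropy `{X ∈ g | ∀ Y ∈ n, ξ₀ [X,Y] = 0}` as a submodule of `g`. -/
def isoSub (g : Type*) [LieRing g] [LieAlgebra ℝ g] (n : LieIdeal ℝ g)
    (ξ₀ : Module.Dual ℝ g) : Submodule ℝ g where
  carrier := {X | ∀ Y ∈ n, ξ₀ ⁅X, Y⁆ = 0}
  add_mem' := fun {a b} ha hb Y hY => by
    rw [add_lie, map_add, ha Y hY, hb Y hY, add_zero]
  zero_mem' := fun Y _ => by rw [zero_lie, map_zero]
  smul_mem' := fun c x hx Y hY => by rw [smul_lie, map_smul, hx Y hY, smul_zero]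

/-- Lemma 3.4, (i) ⇒ (ii): if `g` is a finite-dimensional real Lie algebra with a nilpotent Lie
ideal `n` of codimension 1 and `ξ₀ ∈ g*` has trivial coadjoint isotropy, then `[g,z] ≠ 0`,
`dim z = 1` and `n(ξ₀|_n) = z`, where `z` is the centre of `n`. -/
theorem exactSymplectic_implies_flat
    (g : Type*) [LieRing g] [LieAlgebra ℝ g] [FiniteDimensional ℝ g]
    (n : LieIdeal ℝ g) [LieRing.IsNilpotent ↥n]
    (hcodim : finrank ℝ (g ⧸ n) = 1)
    (ξ₀ : Module.Dual ℝ g)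
    (hξ₀ : ∀ X : g, (∀ Y : g, ξ₀ ⁅X, Y⁆ = 0) → X = 0) :
    (∃ X Z : g, Z ∈ centreOfIdeal g n ∧ ⁅X, Z⁆ ≠ 0) ∧
    finrank ℝ (centreOfIdeal g n) = 1 ∧
    {X : g | X ∈ n ∧ ∀ Y ∈ n, ξ₀ ⁅X, Y⁆ = 0} = (centreOfIdeal g n : Set g) := by
  classical
  set W : Submodule ℝ g := isoSub g n ξ₀ with hWdef
  have hWmem : ∀ X : g, X ∈ W ↔ ∀ Y ∈ n, ξ₀ ⁅X, Y⁆ = 0 := fun X => Iff.rfl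
  -- the injective map W → (g/n)*
  have hker : ∀ X : W, (n : Submodule ℝ g) ≤
      LinearMap.ker (ξ₀ ∘ₗ LieAlgebra.ad ℝ g (X : g)) := by
    intro X Y hY
    simpa using X.2 Y hY
  let ψ : W →ₗ[ℝ] Module.Dual ℝ (g ⧸ n) :=
    { toFun := fun X => Submodule.liftQ (n : Submodule ℝ g)
        (ξ₀ ∘ₗ LieAlgebra.ad ℝ g (X : g)) (hker X)
      map_add' := by
        intro a b
        apply LinearMap.ext
        intro y
        obtain ⟨x, rfl⟩ := Submodule.Quotient.mk_surjective _ y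
        show ξ₀ ⁅((a + b : W) : g), x⁆ = ξ₀ ⁅(a : g), x⁆ + ξ₀ ⁅(b : g), x⁆
        rw [Submodule.coe_add, add_lie, map_add]
      map_smul' := by
        intro c a
        apply LinearMap.ext
        intro y
        obtain ⟨x, rfl⟩ := Submodule.Quotient.mk_surjective _ y
        show ξ₀ ⁅((c • a : W) : g), x⁆ = c * ξ₀ ⁅(a : g), x⁆
        rw [Submodule.coe_smul, smul_lie, map_smul, smul_eq_mul] }
  have hψinj : Function.Injective ψ := by
    rw [injective_iff_map_eq_zero]
    intro X hX
    have : ∀ Y : g, ξ₀ ⁅(X : g), Y⁆ = 0 := by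
      intro Y
      have := congrArg (fun f => f (Submodule.Quotient.mk Y)) hX
      exact this
    exact Subtype.ext (hξ₀ _ this)
  haveI : FiniteDimensional ℝ (g ⧸ n) :=
    (inferInstance : FiniteDimensional ℝ (g ⧸ (n : Submodule ℝ g)))
  have hWle : finrank ℝ W ≤ 1 := by
    have := LinearMap.finrank_le_finrank_of_injective hψinj
    rwa [Subspace.dual_finrank_eq, hcodim] at this
  -- n is not trivial
  have hnbot : n ≠ ⊥ := by
    intro h
    have hsub : (n : Submodule ℝ g) = ⊥ := by rw [h]; rfl
    have e : (g ⧸ (n : Submodule ℝ g)) ≃ₗ[ℝ] g := Submodule.quotEquivOfEqBot _ hsub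
    have hg1 : finrank ℝ g = 1 := by rw [← e.finrank_eq]; exact hcodim
    obtain ⟨v, hv0, hv⟩ := finrank_eq_one_iff'.mp hg1
    refine hv0 (hξ₀ v fun Y => ?_)
    obtain ⟨c, rfl⟩ := hv Y
    rw [lie_smul, lie_self, smul_zero, map_zero]
  haveI : Nontrivial (↥n) := (LieSubmodule.nontrivial_iff_ne_bot ℝ g g).mpr hnbot
  haveI : Nontrivial (LieAlgebra.center ℝ ↥n) := LieAlgebra.non_trivial_center_of_isNilpotent
  obtain ⟨Z, hZ0⟩ := exists_ne (0 : LieAlgebra.center ℝ ↥n)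
  set z0 : g := ((Z : ↥n) : g) with hz0def
  have hz0n : z0 ∈ n := (Z : ↥n).2
  have hz0c : ∀ Y ∈ n, ⁅z0, Y⁆ = 0 := by
    intro Y hY
    have h1 : ⁅(⟨Y, hY⟩ : ↥n), (Z : ↥n)⁆ = 0 := Z.2 ⟨Y, hY⟩
    have h2 : ⁅Y, z0⁆ = 0 := by
      have := congrArg (fun w : ↥n => (w : g)) h1
      simpa using this
    rw [← lie_skew, h2, neg_zero]
  have hz0ne : z0 ≠ 0 := by
    intro h
    apply hZ0
    have : (Z : ↥n) = 0 := Subtype.ext h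
    exact Subtype.ext this
  have hz0centre : z0 ∈ centreOfIdeal g n := ⟨hz0n, hz0c⟩
  have hcentre_le_W : centreOfIdeal g n ≤ W := by
    rintro X ⟨hXn, hXb⟩
    intro Y hY
    rw [hXb Y hY, map_zero]
  have hspan_le : Submodule.span ℝ {z0} ≤ centreOfIdeal g n := by
    rw [Submodule.span_singleton_le_iff_mem]; exact hz0centre
  have hspanrank : finrank ℝ (Submodule.span ℝ {z0}) = 1 := finrank_span_singleton hz0ne
  have hspan_eq_W : Submodule.span ℝ {z0} = W :=
    Submodule.eq_of_le_of_finrank_le (hspan_le.trans hcentre_le_W)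
      (hWle.trans_eq hspanrank.symm)
  have hcentre_eq_W : centreOfIdeal g n = W :=
    le_antisymm hcentre_le_W (hspan_eq_W ▸ hspan_le)
  refine ⟨?_, ?_, ?_⟩
  · -- existence of nonzero bracket with the centre
    by_contra h
    push_neg at h
    refine hz0ne (hξ₀ z0 fun Y => ?_)
    have : ⁅Y, z0⁆ = 0 := h Y z0 hz0centre
    rw [← lie_skew, this, neg_zero, map_zero]
  · rw [hcentre_eq_W, ← hspan_eq_W]; exact hspanrank
  · ext X
    constructor
    · rintro ⟨hXn, hXb⟩
      exact hcentre_eq_W ▸ ((hWmem X).mpr hXb)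
    · rintro ⟨hXn, hXb⟩
      exact ⟨hXn, fun Y hY => by rw [hXb Y hY, map_zero]⟩
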